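/- Assume ω* < ω_max. With h(ω) := exp(ω)/(1 − exp(ω)) and the strictly increasing sequence ω^c_0 := ω*, ω^c_n := log(1 − exp(υ̂ − β·ω^c_{n−1})) for n ≥ 1, the limit lim_{n→∞} (δ/β)^{n−1}·∏_{j=1}^n h(ω^c_j) = +∞. -/

import Mathlib

open Real

set_option maxHeartbeats 1600000 in
/-- With `h ω = exp ω / (1 - exp ω)` and the strictly increasing sequence
`ω^c_0 = ω*`, `ω^c_{n+1} = log (1 - exp (υ̂ - β ω^c_n))`, the limit
`lim_n (δ/β)^(n-1) * ∏_{j=1}^n h (ω^c_j) = +∞`. -/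
theorem stmt_9 (β δ s cmin : ℝ)
    (hβ : β ∈ Set.Ioc (0 : ℝ) 1) (hδ : δ ∈ Set.Ioo (0 : ℝ) 1)
    (hs1 : 1 / (1 + β) < s) (hs2 : s < 1)
    (hcmin : cmin ∈ Set.Ioo (0 : ℝ) s)
    (hcmineq : log cmin + β * log (1 - cmin) = log s + β * log (1 - s))
    (hωlt : log (β / (β + δ)) < log (1 - cmin))
    (w : ℕ → ℝ) (hw0 : w 0 = log (β / (β + δ)))
    (hwrec : ∀ n, w (n + 1) = log (1 - exp ((log s + β * log (1 - s)) - β * w n))) :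
    Filter.Tendsto
      (fun n : ℕ => (δ / β) ^ (n - 1) *
        ∏ j ∈ Finset.Icc 1 n, exp (w j) / (1 - exp (w j)))
      Filter.atTop Filter.atTop := by
  obtain ⟨hβ0, hβ1⟩ := hβ
  obtain ⟨hδ0, hδ1⟩ := hδ
  obtain ⟨hc0, hcs⟩ := hcmin
  have hβδ : 0 < β + δ := by linarith
  set υ : ℝ := log s + β * log (1 - s) with hυ
  set ωs : ℝ := log (β / (β + δ)) with hωs
  set ωm : ℝ := log (1 - cmin) with hωm
  have hc1 : cmin < 1 := by linarith
  have h1c : (0:ℝ) < 1 - cmin := by linarith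
  -- cmin < c* := δ/(β+δ)
  have hccs : cmin < δ / (β + δ) := by
    have h1 : β / (β + δ) < 1 - cmin := by
      have := Real.exp_lt_exp.2 hωlt
      rwa [Real.exp_log (by positivity), Real.exp_log h1c] at this
    have : β / (β + δ) = 1 - δ / (β + δ) := by field_simp; ring
    rw [this] at h1; linarith
  have hcs0 : (0:ℝ) < δ / (β + δ) := by positivity
  have hcs2 : δ / (β + δ) < 1 / (1 + β) := by
    rw [div_lt_div_iff₀ hβδ (by linarith)]
    nlinarith
  -- the utility function and its strict monotonicity on (0, 1/(1+β))
  set f : ℝ → ℝ := fun c => log c + β * log (1 - c) with hf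
  have hmono : StrictMonoOn f (Set.Ioo (0:ℝ) (1 / (1 + β))) := by
    have hconv : Convex ℝ (Set.Ioo (0:ℝ) (1 / (1 + β))) := convex_Ioo _ _
    apply strictMonoOn_of_deriv_pos hconv
    · apply ContinuousOn.add
      · exact Real.continuousOn_log.comp continuousOn_id
          (fun x hx => ne_of_gt hx.1)
      · apply ContinuousOn.mul continuousOn_const
        apply Real.continuousOn_log.comp (by fun_prop)
        intro x hx
        have hx2 : x < 1 := lt_of_lt_of_le hx.2 (by
          rw [div_le_one (by linarith)]; linarith)
        simp only [Set.mem_Ioo] at hx ⊢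
        intro h
        simp only [Set.mem_compl_iff, Set.mem_singleton_iff] at h
        nlinarith [hx.1]
    · intro x hx
      rw [interior_Ioo] at hx
      obtain ⟨hx0, hx1⟩ := hx
      have hx2 : x < 1 := lt_trans hx1 (by
        rw [div_lt_one (by linarith)]; linarith)
      have h1x : (0:ℝ) < 1 - x := by linarith
      have hd1 : HasDerivAt (fun c : ℝ => log (1 - c)) ((1 - x)⁻¹ * (-1)) x := by
        exact (Real.hasDerivAt_log (ne_of_gt h1x)).comp x
          (((hasDerivAt_id x).const_sub 1).congr_deriv rfl)
      have hd : HasDerivAt f (x⁻¹ + β * ((1 - x)⁻¹ * (-1))) x :=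
        (Real.hasDerivAt_log (ne_of_gt hx0)).add (hd1.const_mul β)
      rw [hd.deriv]
      have hxb : x * (1 + β) < 1 := by
        have := (lt_div_iff₀ (by linarith : (0:ℝ) < 1 + β)).mp hx1
        linarith
      have key : β / (1 - x) < 1 / x := by
        rw [div_lt_div_iff₀ h1x hx0]
        nlinarith
      have : β * ((1 - x)⁻¹) < x⁻¹ := by
        rw [inv_eq_one_div, inv_eq_one_div]
        calc β * (1 / (1 - x)) = β / (1 - x) := by ring
        _ < 1 / x := key
      nlinarith
  -- the key inequality: υ - β * ωs < log (δ/(β+δ))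
  have hωseq : log (1 - δ / (β + δ)) = ωs := by
    congr 1; field_simp; ring
  have hkey : υ - β * ωs < log (δ / (β + δ)) := by
    have h1 : f cmin < f (δ / (β + δ)) :=
      hmono ⟨hc0, lt_trans hccs hcs2⟩ ⟨hcs0, hcs2⟩ hccs
    have h2 : f cmin = υ := hcmineq
    have h3 : f (δ / (β + δ)) = log (δ / (β + δ)) + β * ωs := by
      rw [hf]; simp only []; rw [hωseq]
    rw [h2, h3] at h1; linarith
  have hcslt1 : δ / (β + δ) < 1 := by
    rw [div_lt_one hβδ]; linarith
  -- domain facts for x ≥ ωs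
  have hdom : ∀ x : ℝ, ωs ≤ x → exp (υ - β * x) < δ / (β + δ) := by
    intro x hx
    have : υ - β * x ≤ υ - β * ωs := by nlinarith
    calc exp (υ - β * x) ≤ exp (υ - β * ωs) := Real.exp_le_exp.2 this
      _ < exp (log (δ / (β + δ))) := Real.exp_lt_exp.2 hkey
      _ = δ / (β + δ) := Real.exp_log hcs0
  have hdom1 : ∀ x : ℝ, ωs ≤ x → exp (υ - β * x) < 1 :=
    fun x hx => lt_trans (hdom x hx) hcslt1
  -- g is strictly monotone where defined
  have hgmono : ∀ x y : ℝ, ωs ≤ x → x < y →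
      log (1 - exp (υ - β * x)) < log (1 - exp (υ - β * y)) := by
    intro x y hx hxy
    apply Real.log_lt_log (by linarith [hdom1 x hx])
    have : exp (υ - β * y) < exp (υ - β * x) := Real.exp_lt_exp.2 (by nlinarith)
    linarith
  -- fixed point: g ωm = ωm
  have hfix : log (1 - exp (υ - β * ωm)) = ωm := by
    have : υ - β * ωm = log cmin := by linarith [hcmineq]
    rw [this, Real.exp_log hc0]
  have hωsωm : ωs < ωm := hωlt
  -- base: w 1 > w 0
  have hw01 : w 0 < w 1 := by
    rw [hw0, hwrec 0, hw0]
    have h1 : exp (υ - β * ωs) < δ / (β + δ) := hdom ωs le_rfl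
    have h2 : β / (β + δ) < 1 - exp (υ - β * ωs) := by
      have : β / (β + δ) = 1 - δ / (β + δ) := by field_simp; ring
      rw [this]; linarith
    calc ωs = log (β / (β + δ)) := rfl
      _ < log (1 - exp (υ - β * ωs)) := Real.log_lt_log (by positivity) h2
  -- invariant
  have hinv : ∀ n, ωs ≤ w n ∧ w n < ωm ∧ w n < w (n + 1) := by
    intro n
    induction n with
    | zero => exact ⟨le_of_eq hw0.symm, by rw [hw0]; exact hωsωm, hw01⟩
    | succ n ih =>
      obtain ⟨h1, h2, h3⟩ := ih
      have h4 : ωs ≤ w (n + 1) := le_trans h1 (le_of_lt h3)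
      have h5 : w (n + 1) < ωm := by
        rw [hwrec n, ← hfix]
        exact hgmono (w n) ωm h1 h2
      have h6 : w (n + 1) < w (n + 2) := by
        rw [hwrec n, hwrec (n + 1)]
        exact hgmono (w n) (w (n + 1)) h1 h3
      exact ⟨h4, h5, h6⟩
  have hwmono : StrictMono w := strictMono_nat_of_lt_succ fun n => (hinv n).2.2
  have hwlt0 : ∀ n, exp (w n) < 1 := by
    intro n
    have := (hinv n).2.1
    have hm1 : ωm < 0 := by
      rw [hωm]
      exact Real.log_neg h1c (by linarith)
    calc exp (w n) < exp 0 := Real.exp_lt_exp.2 (by linarith)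
      _ = 1 := Real.exp_zero
  -- h(w 0) = β/δ
  set h1v : ℝ := exp (w 1) / (1 - exp (w 1)) with hh1v
  have hew1 : 0 < 1 - exp (w 1) := by linarith [hwlt0 1]
  have hh1pos : 0 < h1v := div_pos (exp_pos _) hew1
  have he0 : exp (w 0) = β / (β + δ) := by
    rw [hw0]; exact Real.exp_log (by positivity)
  have hr : 1 < δ / β * h1v := by
    have he : β / (β + δ) < exp (w 1) := by
      rw [← he0]; exact Real.exp_lt_exp.2 hw01
    have h2 : β < exp (w 1) * (β + δ) := (div_lt_iff₀ hβδ).mp he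
    have hmonoh : β / δ < h1v := by
      rw [hh1v, div_lt_div_iff₀ hδ0 hew1]
      nlinarith
    have h3 : δ / β * (β / δ) = 1 := by field_simp
    calc (1:ℝ) = δ / β * (β / δ) := h3.symm
      _ < δ / β * h1v := mul_lt_mul_of_pos_left hmonoh (by positivity)
  -- lower bound sequence
  have hlow : ∀ n : ℕ, 1 ≤ n →
      h1v * (δ / β * h1v) ^ (n - 1) ≤
        (δ / β) ^ (n - 1) * ∏ j ∈ Finset.Icc 1 n, exp (w j) / (1 - exp (w j)) := by
    intro n hn
    obtain ⟨m, rfl⟩ := Nat.exists_eq_add_of_le hn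
    have hcard : (Finset.Icc 1 (1 + m)).card = 1 + m := by
      rw [Nat.card_Icc]; omega
    have hprod : h1v ^ (1 + m) ≤ ∏ j ∈ Finset.Icc 1 (1 + m), exp (w j) / (1 - exp (w j)) := by
      calc h1v ^ (1 + m) = ∏ _j ∈ Finset.Icc 1 (1 + m), h1v := by
            rw [Finset.prod_const, hcard]
        _ ≤ _ := by
            apply Finset.prod_le_prod (fun i _ => le_of_lt hh1pos)
            intro j hj
            rw [Finset.mem_Icc] at hj
            have hj1 : w 1 ≤ w j := hwmono.le_iff_le.2 hj.1
            have hewj : 0 < 1 - exp (w j) := by linarith [hwlt0 j]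
            rw [hh1v, div_le_div_iff₀ hew1 hewj]
            have : exp (w 1) ≤ exp (w j) := Real.exp_le_exp.2 hj1
            nlinarith [exp_pos (w 1), exp_pos (w j)]
    have hm : 1 + m - 1 = m := by omega
    rw [hm]
    calc h1v * (δ / β * h1v) ^ m = (δ / β) ^ m * h1v ^ (1 + m) := by
          rw [mul_pow, pow_add]; ring
      _ ≤ (δ / β) ^ m * ∏ j ∈ Finset.Icc 1 (1 + m), exp (w j) / (1 - exp (w j)) := by
          apply mul_le_mul_of_nonneg_left hprod (by positivity)
  -- conclude
  have htend : Filter.Tendsto (fun n : ℕ => h1v * (δ / β * h1v) ^ (n - 1))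
      Filter.atTop Filter.atTop := by
    apply Filter.Tendsto.const_mul_atTop hh1pos
    exact (tendsto_pow_atTop_atTop_of_one_lt hr).comp (Filter.tendsto_sub_atTop_nat 1)
  apply Filter.tendsto_atTop_mono' _ _ htend
  filter_upwards [Filter.eventually_ge_atTop 1] with n hn
  exact hlow n hn
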